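/- Given any t-intersecting family A of set partitions of [n], there exists a t-intersecting family A* of set partitions of [n] with |A*| = |A| which is compressed, i.e. S_{ij}(A*) = A* for all i ≠ j in [n], obtained from A by repeatedly applying splitting operations S_{ij}. -/

import Mathlib

/-- A set partition of `Fin n`, modelled as a finite set of blocks. -/
def IsSetPartition {n : ℕ} (P : Finset (Finset (Fin n))) : Prop :=
  (∀ b ∈ P, b.Nonempty) ∧ (∀ b ∈ P, ∀ c ∈ P, b ≠ c → Disjoint b c) ∧
    P.sup id = Finset.univ

/-- The `n`-th Bell number: the number of set partitions of an `n`-element set. -/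
noncomputable def bell (n : ℕ) : ℕ :=
  Set.ncard {P : Finset (Finset (Fin n)) | IsSetPartition P}

/-- The number of singleton-free set partitions of an `n`-element set. -/
noncomputable def bellT (n : ℕ) : ℕ :=
  Set.ncard {P : Finset (Finset (Fin n)) | IsSetPartition P ∧ ∀ b ∈ P, 2 ≤ b.card}

/-- The `(i,j)`-split of a set partition `P`. -/
noncomputable def splitP {n : ℕ} (i j : Fin n) (P : Finset (Finset (Fin n))) :
    Finset (Finset (Fin n)) :=
  if h : ∃ B, B ∈ P ∧ i ∈ B ∧ j ∈ B then
    (P \ {h.choose}) ∪ {{i}, h.choose \ {i}}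
  else P

/-- The `(i,j)`-splitting of a family of set partitions. -/
noncomputable def splitFam {n : ℕ} (i j : Fin n)
    (A : Set (Finset (Finset (Fin n)))) : Set (Finset (Finset (Fin n))) :=
  (A \ {P ∈ A | splitP i j P ∉ A}) ∪ (splitP i j '' {P ∈ A | splitP i j P ∉ A})

/-- A family is `t`-intersecting if any two members share at least `t` blocks. -/
def TInter {n : ℕ} (t : ℕ) (A : Set (Finset (Finset (Fin n)))) : Prop :=
  ∀ P ∈ A, ∀ Q ∈ A, t ≤ (P ∩ Q).card

section Aux
variable {n : ℕ}

lemma block_unique {P : Finset (Finset (Fin n))} (hP : IsSetPartition P)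
    {B C : Finset (Fin n)} {x : Fin n} (hB : B ∈ P) (hC : C ∈ P)
    (hxB : x ∈ B) (hxC : x ∈ C) : B = C := by
  by_contra h
  exact Finset.disjoint_left.mp (hP.2.1 B hB C hC h) hxB hxC

lemma splitP_of_not_exists {P : Finset (Finset (Fin n))} {i j : Fin n}
    (h : ¬ ∃ B, B ∈ P ∧ i ∈ B ∧ j ∈ B) : splitP i j P = P := dif_neg h

lemma splitP_eq {P : Finset (Finset (Fin n))} (hP : IsSetPartition P)
    {B : Finset (Fin n)} {i j : Fin n} (hB : B ∈ P) (hi : i ∈ B) (hj : j ∈ B) :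
    splitP i j P = (P \ {B}) ∪ {{i}, B \ {i}} := by
  have h : ∃ B, B ∈ P ∧ i ∈ B ∧ j ∈ B := ⟨B, hB, hi, hj⟩
  rw [splitP, dif_pos h,
    block_unique hP h.choose_spec.1 hB h.choose_spec.2.1 hi]

variable {P : Finset (Finset (Fin n))} {B : Finset (Fin n)} {i j : Fin n}

lemma jmem (hij : i ≠ j) (hj : j ∈ B) : j ∈ B \ {i} := by
  simp [hj, hij.symm]

lemma singleton_not_mem (hP : IsSetPartition P) (hij : i ≠ j)
    (hB : B ∈ P) (hi : i ∈ B) (hj : j ∈ B) : ({i} : Finset (Fin n)) ∉ P := by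
  intro h'
  have := block_unique hP h' hB (Finset.mem_singleton_self i) hi
  rw [← this] at hj
  exact hij (Finset.mem_singleton.mp hj).symm

lemma sdiff_not_mem (hP : IsSetPartition P) (hij : i ≠ j)
    (hB : B ∈ P) (hi : i ∈ B) (hj : j ∈ B) : B \ {i} ∉ P := by
  intro h'
  have := block_unique hP h' hB (jmem hij hj) hj
  have h2 : i ∈ B \ {i} := by rw [this]; exact hi
  simp at h2

end Aux
section Aux2
variable {n : ℕ} {P : Finset (Finset (Fin n))} {B : Finset (Fin n)} {i j : Fin n}

lemma card_splitP (hP : IsSetPartition P) (hij : i ≠ j)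
    (hB : B ∈ P) (hi : i ∈ B) (hj : j ∈ B) :
    (splitP i j P).card = P.card + 1 := by
  rw [splitP_eq hP hB hi hj]
  have h1 : ({i} : Finset (Fin n)) ∉ P \ {B} :=
    fun h => singleton_not_mem hP hij hB hi hj (Finset.mem_sdiff.mp h).1
  have h2 : B \ {i} ∉ P \ {B} :=
    fun h => sdiff_not_mem hP hij hB hi hj (Finset.mem_sdiff.mp h).1
  have h3 : ({i} : Finset (Fin n)) ≠ B \ {i} := by
    intro h
    have : i ∈ B \ {i} := h ▸ Finset.mem_singleton_self i
    simp at this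
  rw [Finset.card_union_of_disjoint]
  · rw [Finset.sdiff_singleton_eq_erase, Finset.card_erase_of_mem hB,
      Finset.card_insert_of_notMem (by simp [h3]), Finset.card_singleton]
    have : 1 ≤ P.card := Finset.card_pos.mpr ⟨B, hB⟩
    omega
  · rw [Finset.disjoint_insert_right, Finset.disjoint_singleton_right]
    exact ⟨h1, h2⟩

lemma splitP_isPartition (hP : IsSetPartition P) (hij : i ≠ j)
    (hB : B ∈ P) (hi : i ∈ B) (hj : j ∈ B) :
    IsSetPartition (splitP i j P) := by
  rw [splitP_eq hP hB hi hj]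
  have hdisj : ∀ C ∈ P, C ≠ B → Disjoint B C := fun C hC hne => hP.2.1 B hB C hC (Ne.symm hne)
  have hiC : ∀ C ∈ P, C ≠ B → i ∉ C := by
    intro C hC hne h
    exact hne (block_unique hP hC hB h hi)
  refine ⟨?_, ?_, ?_⟩
  · intro b hb
    rcases Finset.mem_union.mp hb with h | h
    · exact hP.1 b (Finset.mem_sdiff.mp h).1
    · rcases Finset.mem_insert.mp h with h | h
      · exact h ▸ ⟨i, Finset.mem_singleton_self i⟩
      · rw [Finset.mem_singleton.mp h]
        exact ⟨j, jmem hij hj⟩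
  · intro b hb c hc hbc
    have key : ∀ C, C ∈ P → C ≠ B → ∀ d ∈ ({{i}, B \ {i}} : Finset (Finset (Fin n))), Disjoint C d := by
      intro C hC hne d hd
      rcases Finset.mem_insert.mp hd with h | h
      · subst h
        simpa using hiC C hC hne
      · rw [Finset.mem_singleton.mp h]
        exact Finset.disjoint_of_subset_right (Finset.sdiff_subset) (hdisj C hC hne).symm
    rcases Finset.mem_union.mp hb with h1 | h1 <;> rcases Finset.mem_union.mp hc with h2 | h2
    · obtain ⟨hbP, hbB⟩ := Finset.mem_sdiff.mp h1
      obtain ⟨hcP, hcB⟩ := Finset.mem_sdiff.mp h2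
      exact hP.2.1 b hbP c hcP hbc
    · obtain ⟨hbP, hbB⟩ := Finset.mem_sdiff.mp h1
      exact key b hbP (by simpa using hbB) c h2
    · obtain ⟨hcP, hcB⟩ := Finset.mem_sdiff.mp h2
      exact (key c hcP (by simpa using hcB) b h1).symm
    · rcases Finset.mem_insert.mp h1 with h1 | h1 <;> rcases Finset.mem_insert.mp h2 with h2 | h2
      · exact absurd (h1.trans h2.symm) hbc
      · subst h1; rw [Finset.mem_singleton.mp h2]
        simp
      · subst h2; rw [Finset.mem_singleton.mp h1]
        exact (by simp : Disjoint ({i} : Finset (Fin n)) (B \ {i})).symm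
      · exact absurd ((Finset.mem_singleton.mp h1).trans (Finset.mem_singleton.mp h2).symm) hbc
  · have hBsplit : ({i} : Finset (Fin n)) ⊔ (B \ {i}) = B := by
      rw [Finset.sup_eq_union, Finset.sdiff_singleton_eq_erase]
      simpa using Finset.insert_erase hi
    rw [Finset.sup_union]
    have : ({{i}, B \ {i}} : Finset (Finset (Fin n))).sup id = B := by
      rw [Finset.sup_insert, Finset.sup_singleton]
      exact hBsplit
    rw [this]
    have hPeq : (P \ {B}) ∪ {B} = P := by
      rw [Finset.sdiff_union_self_eq_union]
      exact Finset.union_eq_left.mpr (by simpa using hB)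
    calc (P \ {B}).sup id ⊔ B = ((P \ {B}) ∪ {B}).sup id := by
          rw [Finset.sup_union, Finset.sup_singleton]; rfl
      _ = Finset.univ := by rw [hPeq]; exact hP.2.2

end Aux2
section Aux3
variable {n : ℕ} {P Q : Finset (Finset (Fin n))} {B : Finset (Fin n)} {i j : Fin n}

lemma mem_splitP_iff (hP : IsSetPartition P) (hB : B ∈ P) (hi : i ∈ B) (hj : j ∈ B)
    {C : Finset (Fin n)} :
    C ∈ splitP i j P ↔ (C ∈ P ∧ C ≠ B) ∨ C = {i} ∨ C = B \ {i} := by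
  rw [splitP_eq hP hB hi hj]
  simp only [Finset.mem_union, Finset.mem_sdiff, Finset.mem_insert, Finset.mem_singleton,
    ne_eq]

lemma recover (hP : IsSetPartition P) (hij : i ≠ j) (hB : B ∈ P) (hi : i ∈ B) (hj : j ∈ B) :
    (splitP i j P \ {{i}, B \ {i}}) ∪ {B} = P := by
  rw [splitP_eq hP hB hi hj]
  have h1 := singleton_not_mem hP hij hB hi hj
  have h2 := sdiff_not_mem hP hij hB hi hj
  ext C
  simp only [Finset.mem_union, Finset.mem_sdiff, Finset.mem_insert, Finset.mem_singleton]
  by_cases hCB : C = B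
  · subst hCB
    simp only [hB, iff_true]
    tauto
  · constructor
    · intro h
      rcases h with ⟨h, hne⟩ | h
      · rcases h with ⟨hCP, _⟩ | h
        · exact hCP
        · tauto
      · exact absurd h hCB
    · intro hC
      have e1 : C ≠ {i} := by rintro rfl; exact h1 hC
      have e2 : C ≠ B \ {i} := by rintro rfl; exact h2 hC
      exact Or.inl ⟨Or.inl ⟨hC, hCB⟩, by tauto⟩

lemma splitP_inj (hP : IsSetPartition P) (hQ : IsSetPartition Q) (hij : i ≠ j)
    (hBP : ∃ B, B ∈ P ∧ i ∈ B ∧ j ∈ B) (hBQ : ∃ B, B ∈ Q ∧ i ∈ B ∧ j ∈ B)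
    (heq : splitP i j P = splitP i j Q) : P = Q := by
  obtain ⟨BP, hBP, hiP, hjP⟩ := hBP
  obtain ⟨BQ, hBQ, hiQ, hjQ⟩ := hBQ
  have hmem : BP \ {i} ∈ splitP i j Q := by
    rw [← heq, mem_splitP_iff hP hBP hiP hjP]
    tauto
  rw [mem_splitP_iff hQ hBQ hiQ hjQ] at hmem
  have hBeq : BP = BQ := by
    rcases hmem with ⟨hmem, _⟩ | hmem | hmem
    · have h := block_unique hQ hmem hBQ (jmem hij hjP) hjQ
      have : i ∈ BP \ {i} := by rw [h]; exact hiQ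
      simp at this
    · have : i ∈ BP \ {i} := by rw [hmem]; exact Finset.mem_singleton_self i
      simp at this
    · rw [Finset.sdiff_singleton_eq_erase, Finset.sdiff_singleton_eq_erase] at hmem
      have := congrArg (insert i) hmem
      rwa [Finset.insert_erase hiP, Finset.insert_erase hiQ] at this
  subst hBeq
  rw [← recover hP hij hBP hiP hjP, ← recover hQ hij hBQ hiQ hjP, heq]

lemma card_lt (hP : IsSetPartition P) (hij : i ≠ j) (hB : B ∈ P) (hi : i ∈ B) (hj : j ∈ B) :
    P.card < n := by
  have hsum : ∑ b ∈ P, b.card = n := by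
    have : P.biUnion id = Finset.univ := by
      rw [← Finset.sup_eq_biUnion]; exact hP.2.2
    calc ∑ b ∈ P, b.card = (P.biUnion id).card := by
          rw [Finset.card_biUnion]
          · simp
          · intro x hx y hy hxy; exact hP.2.1 x hx y hy hxy
      _ = n := by rw [this]; simp
  have hB2 : 2 ≤ B.card := by
    rw [← Finset.card_pair hij]
    exact Finset.card_le_card (by intro x hx; rcases Finset.mem_insert.mp hx with rfl | hx
                                  exact hi
                                  rw [Finset.mem_singleton.mp hx]; exact hj)
  have hrest : P.card - 1 ≤ ∑ b ∈ P.erase B, b.card := by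
    calc P.card - 1 = (P.erase B).card := (Finset.card_erase_of_mem hB).symm
      _ = ∑ b ∈ P.erase B, 1 := by simp
      _ ≤ ∑ b ∈ P.erase B, b.card :=
          Finset.sum_le_sum fun b hb => Finset.card_pos.mpr (hP.1 b (Finset.mem_of_mem_erase hb))
  have := Finset.add_sum_erase P Finset.card hB
  have hp1 : 1 ≤ P.card := Finset.card_pos.mpr ⟨B, hB⟩
  omega

end Aux3


section Fam
variable {n t : ℕ} {A : Set (Finset (Finset (Fin n)))} {P Q : Finset (Finset (Fin n))}
  {i j : Fin n}

lemma exists_block (hP : P ∈ A) (hPs : splitP i j P ∉ A) :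
    ∃ B, B ∈ P ∧ i ∈ B ∧ j ∈ B := by
  by_contra h
  rw [splitP_of_not_exists h] at hPs
  exact hPs hP

lemma splitFam_of_empty (h : {P ∈ A | splitP i j P ∉ A} = ∅) :
    splitFam i j A = A := by
  rw [splitFam, h]
  simp

lemma mem_splitFam {x : Finset (Finset (Fin n))} :
    x ∈ splitFam i j A ↔ (x ∈ A ∧ splitP i j x ∈ A) ∨
      ∃ P, (P ∈ A ∧ splitP i j P ∉ A) ∧ splitP i j P = x := by
  rw [splitFam]
  simp only [Set.mem_union, Set.mem_diff, Set.mem_setOf_eq, Set.mem_image, Set.mem_sep_iff]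
  tauto

lemma splitFam_parts (hpart : ∀ P ∈ A, IsSetPartition P) (hij : i ≠ j) :
    ∀ P ∈ splitFam i j A, IsSetPartition P := by
  intro x hx
  rcases mem_splitFam.mp hx with ⟨hx, _⟩ | ⟨P, ⟨hP, hPs⟩, rfl⟩
  · exact hpart x hx
  · obtain ⟨B, hB, hi, hj⟩ := exists_block hP hPs
    exact splitP_isPartition (hpart P hP) hij hB hi hj

lemma mixed_inter (hpart : ∀ P ∈ A, IsSetPartition P) (hA : TInter t A) (hij : i ≠ j)
    (hP : P ∈ A) (hPs : splitP i j P ∉ A) (hQ : Q ∈ A) (hQs : splitP i j Q ∈ A) :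
    t ≤ ((splitP i j P) ∩ Q).card := by
  obtain ⟨B, hB, hi, hj⟩ := exists_block hP hPs
  have hPp := hpart P hP
  have hQp := hpart Q hQ
  by_cases hBQ : B ∈ Q
  · have hse : splitP i j Q = (Q \ {B}) ∪ {{i}, B \ {i}} := splitP_eq hQp hBQ hi hj
    have hsub : P ∩ splitP i j Q ⊆ splitP i j P ∩ Q := by
      intro C hC
      rw [Finset.mem_inter] at hC ⊢
      obtain ⟨hCP, hCs⟩ := hC
      rw [hse] at hCs
      rcases Finset.mem_union.mp hCs with h | h
      · obtain ⟨hCQ, hCB⟩ := Finset.mem_sdiff.mp h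
        refine ⟨?_, hCQ⟩
        rw [mem_splitP_iff hPp hB hi hj]
        exact Or.inl ⟨hCP, by simpa using hCB⟩
      · rcases Finset.mem_insert.mp h with rfl | h
        · exact absurd hCP (singleton_not_mem hPp hij hB hi hj)
        · rw [Finset.mem_singleton.mp h] at hCP
          exact absurd hCP (sdiff_not_mem hPp hij hB hi hj)
    calc t ≤ (P ∩ splitP i j Q).card := hA P hP _ hQs
      _ ≤ _ := Finset.card_le_card hsub
  · have hsub : P ∩ Q ⊆ splitP i j P ∩ Q := by
      intro C hC
      rw [Finset.mem_inter] at hC ⊢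
      obtain ⟨hCP, hCQ⟩ := hC
      refine ⟨?_, hCQ⟩
      rw [mem_splitP_iff hPp hB hi hj]
      exact Or.inl ⟨hCP, fun h => hBQ (h ▸ hCQ)⟩
    calc t ≤ (P ∩ Q).card := hA P hP Q hQ
      _ ≤ _ := Finset.card_le_card hsub

lemma split_split_inter (hpart : ∀ P ∈ A, IsSetPartition P) (hA : TInter t A) (hij : i ≠ j)
    (hP : P ∈ A) (hPs : splitP i j P ∉ A) (hQ : Q ∈ A) (hQs : splitP i j Q ∉ A) :
    t ≤ ((splitP i j P) ∩ (splitP i j Q)).card := by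
  obtain ⟨BP, hBP, hiP, hjP⟩ := exists_block hP hPs
  obtain ⟨BQ, hBQ, hiQ, hjQ⟩ := exists_block hQ hQs
  have hPp := hpart P hP
  have hQp := hpart Q hQ
  have hsing : ({i} : Finset (Fin n)) ∉ P := singleton_not_mem hPp hij hBP hiP hjP
  have hiSplitP : ({i} : Finset (Fin n)) ∈ splitP i j P := by
    rw [mem_splitP_iff hPp hBP hiP hjP]; tauto
  have hiSplitQ : ({i} : Finset (Fin n)) ∈ splitP i j Q := by
    rw [mem_splitP_iff hQp hBQ hiQ hjQ]; tauto
  by_cases hBB : BP = BQ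
  · subst hBB
    have hsub : insert {i} ((P ∩ Q).erase BP) ⊆ splitP i j P ∩ splitP i j Q := by
      intro C hC
      rcases Finset.mem_insert.mp hC with rfl | hC
      · exact Finset.mem_inter.mpr ⟨hiSplitP, hiSplitQ⟩
      · obtain ⟨hCB, hCPQ⟩ := Finset.mem_erase.mp hC
        obtain ⟨hCP, hCQ⟩ := Finset.mem_inter.mp hCPQ
        refine Finset.mem_inter.mpr ⟨?_, ?_⟩
        · rw [mem_splitP_iff hPp hBP hiP hjP]; exact Or.inl ⟨hCP, hCB⟩
        · rw [mem_splitP_iff hQp hBQ hiQ hjQ]; exact Or.inl ⟨hCQ, hCB⟩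
    have hnotmem : ({i} : Finset (Fin n)) ∉ (P ∩ Q).erase BP :=
      fun h => hsing (Finset.mem_inter.mp (Finset.mem_of_mem_erase h)).1
    have hcard : (P ∩ Q).card ≤ (insert ({i} : Finset (Fin n)) ((P ∩ Q).erase BP)).card := by
      rw [Finset.card_insert_of_notMem hnotmem]
      by_cases hm : BP ∈ P ∩ Q
      · rw [Finset.card_erase_of_mem hm]
        have : 1 ≤ (P ∩ Q).card := Finset.card_pos.mpr ⟨BP, hm⟩
        omega
      · rw [Finset.erase_eq_of_notMem hm]; omega
    calc t ≤ (P ∩ Q).card := hA P hP Q hQ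
      _ ≤ _ := hcard
      _ ≤ _ := Finset.card_le_card hsub
  · have hsub : insert {i} (P ∩ Q) ⊆ splitP i j P ∩ splitP i j Q := by
      intro C hC
      rcases Finset.mem_insert.mp hC with rfl | hC
      · exact Finset.mem_inter.mpr ⟨hiSplitP, hiSplitQ⟩
      · obtain ⟨hCP, hCQ⟩ := Finset.mem_inter.mp hC
        have hCBP : C ≠ BP := by
          rintro rfl
          exact hBB (block_unique hQp hCQ hBQ hiP hiQ)
        have hCBQ : C ≠ BQ := by
          rintro rfl
          exact hBB (block_unique hPp hCP hBP hiQ hiP).symm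
        refine Finset.mem_inter.mpr ⟨?_, ?_⟩
        · rw [mem_splitP_iff hPp hBP hiP hjP]; exact Or.inl ⟨hCP, hCBP⟩
        · rw [mem_splitP_iff hQp hBQ hiQ hjQ]; exact Or.inl ⟨hCQ, hCBQ⟩
    have hnotmem : ({i} : Finset (Fin n)) ∉ P ∩ Q :=
      fun h => hsing (Finset.mem_inter.mp h).1
    calc t ≤ (P ∩ Q).card := hA P hP Q hQ
      _ ≤ (insert ({i} : Finset (Fin n)) (P ∩ Q)).card := by
          rw [Finset.card_insert_of_notMem hnotmem]; omega
      _ ≤ _ := Finset.card_le_card hsub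

lemma tinter_splitFam (hpart : ∀ P ∈ A, IsSetPartition P) (hA : TInter t A) (hij : i ≠ j) :
    TInter t (splitFam i j A) := by
  intro x hx y hy
  rcases mem_splitFam.mp hx with ⟨hx1, hx2⟩ | ⟨P, ⟨hP, hPs⟩, rfl⟩ <;>
    rcases mem_splitFam.mp hy with ⟨hy1, hy2⟩ | ⟨Q, ⟨hQ, hQs⟩, rfl⟩
  · exact hA x hx1 y hy1
  · rw [Finset.inter_comm]
    exact mixed_inter hpart hA hij hQ hQs hx1 hx2
  · exact mixed_inter hpart hA hij hP hPs hy1 hy2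
  · exact split_split_inter hpart hA hij hP hPs hQ hQs

end Fam
section NC
variable {n t : ℕ} {A : Set (Finset (Finset (Fin n)))} {i j : Fin n}

lemma injOn_S (hpart : ∀ P ∈ A, IsSetPartition P) (hij : i ≠ j) :
    Set.InjOn (splitP i j) {P ∈ A | splitP i j P ∉ A} := by
  intro P hP Q hQ heq
  exact splitP_inj (hpart P hP.1) (hpart Q hQ.1) hij
    (exists_block hP.1 hP.2) (exists_block hQ.1 hQ.2) heq

lemma ncard_splitFam (hpart : ∀ P ∈ A, IsSetPartition P) (hij : i ≠ j) :
    (splitFam i j A).ncard = A.ncard := by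
  set S := {P ∈ A | splitP i j P ∉ A} with hS
  have hSA : S ⊆ A := fun P hP => hP.1
  have hdisj : Disjoint (A \ S) (splitP i j '' S) := by
    rw [Set.disjoint_left]
    rintro x ⟨hxA, _⟩ ⟨P, hPS, rfl⟩
    exact hPS.2 hxA
  rw [splitFam, ← hS, Set.ncard_union_eq hdisj (Set.toFinite _) (Set.toFinite _),
    Set.ncard_image_of_injOn (injOn_S hpart hij),
    Set.ncard_diff_add_ncard_of_subset hSA (Set.toFinite _)]

end NC

/-- The potential function. -/
noncomputable def Phi {n : ℕ} (F : Set (Finset (Finset (Fin n)))) : ℕ :=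
  ∑ P ∈ F.toFinite.toFinset, (n - P.card)

section Ph
variable {n t : ℕ} {A : Set (Finset (Finset (Fin n)))} {i j : Fin n}

lemma phi_lt (hpart : ∀ P ∈ A, IsSetPartition P) (hij : i ≠ j)
    (hne : {P ∈ A | splitP i j P ∉ A}.Nonempty) :
    Phi (splitFam i j A) < Phi A := by
  classical
  set S := {P ∈ A | splitP i j P ∉ A} with hS
  have hSA : S ⊆ A := fun P hP => hP.1
  set tA := A.toFinite.toFinset with htA
  set tS := S.toFinite.toFinset with htS
  have htSA : tS ⊆ tA := by
    intro x hx
    rw [htA, Set.Finite.mem_toFinset]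
    exact hSA (by rwa [htS, Set.Finite.mem_toFinset] at hx)
  have hset : (splitFam i j A).toFinite.toFinset
      = (tA \ tS) ∪ Finset.image (splitP i j) tS := by
    ext x
    simp only [Set.Finite.mem_toFinset, Finset.mem_union, Finset.mem_sdiff,
      Finset.mem_image, htA, htS, Set.Finite.mem_toFinset, splitFam, Set.mem_union,
      Set.mem_diff, Set.mem_image]
    exact Iff.rfl
  have hdisj : Disjoint (tA \ tS) (Finset.image (splitP i j) tS) := by
    rw [Finset.disjoint_right]
    intro x hx
    obtain ⟨P, hP, rfl⟩ := Finset.mem_image.mp hx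
    rw [htS, Set.Finite.mem_toFinset] at hP
    intro hmem
    rw [Finset.mem_sdiff, htA, Set.Finite.mem_toFinset] at hmem
    exact hP.2 hmem.1
  have hinj : ∀ x ∈ tS, ∀ y ∈ tS, splitP i j x = splitP i j y → x = y := by
    intro x hx y hy
    rw [htS, Set.Finite.mem_toFinset] at hx hy
    exact injOn_S hpart hij hx hy
  have hsum_img : ∑ x ∈ Finset.image (splitP i j) tS, (n - x.card)
      = ∑ P ∈ tS, (n - (splitP i j P).card) := Finset.sum_image hinj
  have hterm : ∀ P ∈ tS, n - (splitP i j P).card < n - P.card := by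
    intro P hP
    rw [htS, Set.Finite.mem_toFinset] at hP
    obtain ⟨B, hB, hi0, hj0⟩ := exists_block hP.1 hP.2
    have hPp := hpart P hP.1
    rw [card_splitP hPp hij hB hi0 hj0]
    have := card_lt hPp hij hB hi0 hj0
    omega
  have htSne : tS.Nonempty := by
    obtain ⟨P, hP⟩ := hne
    exact ⟨P, by rw [htS, Set.Finite.mem_toFinset]; exact hP⟩
  calc Phi (splitFam i j A)
      = ∑ x ∈ tA \ tS, (n - x.card) + ∑ P ∈ tS, (n - (splitP i j P).card) := by
        rw [Phi, hset, Finset.sum_union hdisj, hsum_img]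
    _ < ∑ x ∈ tA \ tS, (n - x.card) + ∑ P ∈ tS, (n - P.card) := by
        exact Nat.add_lt_add_left (Finset.sum_lt_sum_of_nonempty htSne hterm) _
    _ = Phi A := by rw [Phi, Finset.sum_sdiff htSA]

end Ph
lemma main_aux {n t : ℕ} : ∀ (m : ℕ) (A : Set (Finset (Finset (Fin n)))),
    Phi A ≤ m → (∀ P ∈ A, IsSetPartition P) → TInter t A →
    ∃ (L : List (Fin n × Fin n)),
      (∀ p ∈ L, p.1 ≠ p.2) ∧
      TInter t (L.foldl (fun F p => splitFam p.1 p.2 F) A) ∧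
      (L.foldl (fun F p => splitFam p.1 p.2 F) A).ncard = A.ncard ∧
      ∀ i j : Fin n, i ≠ j →
        splitFam i j (L.foldl (fun F p => splitFam p.1 p.2 F) A) =
          L.foldl (fun F p => splitFam p.1 p.2 F) A := by
  intro m
  induction m with
  | zero =>
    intro A hm hpart hA
    by_cases hc : ∀ i j : Fin n, i ≠ j → splitFam i j A = A
    · exact ⟨[], by simp, hA, rfl, hc⟩
    · push_neg at hc
      obtain ⟨i, j, hij, hne⟩ := hc
      have hSne : {P ∈ A | splitP i j P ∉ A}.Nonempty :=
        Set.nonempty_iff_ne_empty.mpr (fun h => hne (splitFam_of_empty h))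
      have := phi_lt hpart hij hSne
      omega
  | succ m ih =>
    intro A hm hpart hA
    by_cases hc : ∀ i j : Fin n, i ≠ j → splitFam i j A = A
    · exact ⟨[], by simp, hA, rfl, hc⟩
    · push_neg at hc
      obtain ⟨i, j, hij, hne⟩ := hc
      have hSne : {P ∈ A | splitP i j P ∉ A}.Nonempty :=
        Set.nonempty_iff_ne_empty.mpr (fun h => hne (splitFam_of_empty h))
      have hlt := phi_lt hpart hij hSne
      obtain ⟨L, hL1, hL2, hL3, hL4⟩ := ih (splitFam i j A) (by omega)
        (splitFam_parts hpart hij) (tinter_splitFam hpart hA hij)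
      refine ⟨(i, j) :: L, ?_, ?_, ?_, ?_⟩
      · intro p hp
        rcases List.mem_cons.mp hp with rfl | hp
        · exact hij
        · exact hL1 p hp
      · simpa using hL2
      · simp only [List.foldl_cons]
        exact hL3.trans (ncard_splitFam hpart hij)
      · simpa using hL4

theorem exists_compressed_family {n t : ℕ}
    (A : Set (Finset (Finset (Fin n))))
    (hpart : ∀ P ∈ A, IsSetPartition P) (hA : TInter t A) :
    ∃ (L : List (Fin n × Fin n)),
      (∀ p ∈ L, p.1 ≠ p.2) ∧
      TInter t (L.foldl (fun F p => splitFam p.1 p.2 F) A) ∧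
      (L.foldl (fun F p => splitFam p.1 p.2 F) A).ncard = A.ncard ∧
      ∀ i j : Fin n, i ≠ j →
        splitFam i j (L.foldl (fun F p => splitFam p.1 p.2 F) A) =
          L.foldl (fun F p => splitFam p.1 p.2 F) A :=
  main_aux (Phi A) A le_rfl hpart hA
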